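/- Let λ be a regular uncountable cardinal with λ > 𝔡. Let ⟨A_n : n < ω⟩ be an ⊆-increasing sequence of infinite subsets of ω with union A, and let ⟨f_α : α < λ⟩ be a <*-increasing sequence in A → Ord such that for each n, ⟨f_α ↾ A_n : α < λ⟩ has an exact upper bound of pointwise cofinality λ. Then there is B ⊆ A with A_n ⊆* B for all n such that ⟨f_α ↾ B : α < λ⟩ has an exact upper bound of pointwise cofinality λ. -/

import Mathlib

open Cardinal Ordinal

/-- `u <* v`: eventual strict domination on `ℕ → ℕ`. -/
def ltStarN (u v : ℕ → ℕ) : Prop := {n | v n ≤ u n}.Finite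

/-- The dominating number 𝔡. -/
noncomputable def dominatingNumber : Cardinal.{0} :=
  sInf {c | ∃ F : Set (ℕ → ℕ), #F = c ∧ ∀ g : ℕ → ℕ, ∃ f ∈ F, ltStarN g f}

/-- mod-finite domination on a set `S ⊆ ℕ`. -/
def ltStarOn (S : Set ℕ) (u v : ℕ → Ordinal) : Prop := {i | i ∈ S ∧ ¬ u i < v i}.Finite

/-- for regular uncountable λ > 𝔡, if each ⟨f_α ↾ A_n⟩ has an exact upper bound
of pointwise cofinality λ, then there is B ⊆ A = ⋃ A_n with A_n ⊆* B for all n such that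
⟨f_α ↾ B⟩ has an exact upper bound of pointwise cofinality λ. -/
theorem stmt_7 (lam : Cardinal.{0}) (hreg : lam.IsRegular) (hunc : ℵ₀ < lam)
    (hlt : dominatingNumber < lam)
    (A : ℕ → Set ℕ) (hmono : ∀ n, A n ⊆ A (n + 1)) (hinf : ∀ n, (A n).Infinite)
    (f : Ordinal → ℕ → Ordinal)
    (hf : ∀ α < lam.ord, ∀ β < lam.ord, α < β → ltStarOn (⋃ n, A n) (f α) (f β))
    (g : ℕ → ℕ → Ordinal)
    (hub : ∀ n, ∀ α < lam.ord, ltStarOn (A n) (f α) (g n))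
    (hexact : ∀ n, ∀ u : ℕ → Ordinal, ltStarOn (A n) u (g n) →
      ∃ α < lam.ord, ltStarOn (A n) u (f α))
    (hcof : ∀ n, ∀ i ∈ A n, (g n i).cof = lam) :
    ∃ B ⊆ ⋃ n, A n, (∀ n, (A n \ B).Finite) ∧
      ∃ gB : ℕ → Ordinal, (∀ i ∈ B, (gB i).cof = lam) ∧
        (∀ α < lam.ord, ltStarOn B (f α) gB) ∧
        (∀ u : ℕ → Ordinal, ltStarOn B u gB → ∃ α < lam.ord, ltStarOn B u (f α)) := by
  classical
  have hlimord : Order.IsSuccLimit lam.ord := Cardinal.isSuccLimit_ord hunc.le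
  have hcofo : lam.ord.cof = lam := hreg.cof_eq
  have hNlt : (#ℕ) < lam.ord.cof := by rw [hcofo, Cardinal.mk_nat]; exact hunc
  -- positivity of g n i
  have gpos : ∀ n, ∀ i ∈ A n, 0 < g n i := by
    intro n i hi
    rcases eq_zero_or_pos (g n i) with h0 | h
    · exfalso
      have := hcof n i hi
      rw [h0, Ordinal.cof_zero] at this
      rw [← this] at hunc
      exact absurd hunc (by simp)
    · exact h
  -- monotonicity of the A chain
  have hmono' : ∀ {m n : ℕ}, m ≤ n → A m ⊆ A n := by
    intro m n h
    induction h with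
    | refl => exact fun _ h => h
    | step _ ih => exact fun i hi => hmono _ (ih hi)
  -- the g n agree mod finite on common domains
  have agree : ∀ m n : ℕ, m ≤ n → ({i | i ∈ A m ∧ g m i ≠ g n i}).Finite := by
    intro m n hmn
    have ha : ({i | i ∈ A m ∧ g n i < g m i}).Finite := by
      set u : ℕ → Ordinal := fun i => if g n i < g m i then g n i else 0 with hu
      have h1 : ltStarOn (A m) u (g m) := by
        apply Set.Finite.subset (Set.finite_empty)
        intro i ⟨hi, hne⟩
        exfalso; apply hne
        by_cases hc : g n i < g m i
        · simpa [hu, hc] using hc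
        · simpa [hu, hc] using gpos m i hi
      obtain ⟨α, hα, hfin⟩ := hexact m u h1
      have h2 := hub n α hα
      apply Set.Finite.subset (hfin.union h2)
      intro i ⟨hi, hlt'⟩
      by_cases h3 : i ∈ {i | i ∈ A m ∧ ¬ u i < f α i}
      · exact Or.inl h3
      · right
        refine ⟨hmono' hmn hi, fun hcon => ?_⟩
        have : u i < f α i := by
          by_contra hcc; exact h3 ⟨hi, hcc⟩
        rw [hu] at this
        simp only [if_pos hlt'] at this
        exact absurd (this.trans hcon) (lt_irrefl _)
    have hb : ({i | i ∈ A m ∧ g m i < g n i}).Finite := by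
      set u : ℕ → Ordinal := fun i => if i ∈ A m ∧ g m i < g n i then g m i else 0 with hu
      have h1 : ltStarOn (A n) u (g n) := by
        apply Set.Finite.subset (Set.finite_empty)
        intro i ⟨hi, hne⟩
        exfalso; apply hne
        by_cases hc : i ∈ A m ∧ g m i < g n i
        · simpa [hu, hc] using hc.2
        · simpa [hu, hc] using gpos n i hi
      obtain ⟨α, hα, hfin⟩ := hexact n u h1
      have h2 := hub m α hα
      apply Set.Finite.subset (hfin.union h2)
      intro i ⟨hi, hlt'⟩
      by_cases h3 : i ∈ {i | i ∈ A n ∧ ¬ u i < f α i}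
      · exact Or.inl h3
      · right
        refine ⟨hi, fun hcon => ?_⟩
        have : u i < f α i := by
          by_contra hcc; exact h3 ⟨hmono' hmn hi, hcc⟩
        rw [hu] at this
        simp only [if_pos (⟨hi, hlt'⟩ : i ∈ A m ∧ g m i < g n i)] at this
        exact absurd (hcon.trans this) (lt_irrefl _)
    apply Set.Finite.subset (ha.union hb)
    intro i ⟨hi, hne⟩
    rcases lt_or_gt_of_ne hne with h | h
    · exact Or.inr ⟨hi, h⟩
    · exact Or.inl ⟨hi, h⟩
  -- definition of gB
  set gB : ℕ → Ordinal := fun i => if h : ∃ n, i ∈ A n then g (Nat.find h) i else 0 with hgB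
  have hgB_eq : ∀ n, ∀ i ∈ A n, ∃ m, m ≤ n ∧ i ∈ A m ∧ gB i = g m i := by
    intro n i hi
    have h : ∃ n, i ∈ A n := ⟨n, hi⟩
    exact ⟨Nat.find h, Nat.find_le hi, Nat.find_spec h, by rw [hgB]; simp [dif_pos h]⟩
  -- gB agrees with g n mod finite on A n
  have hD : ∀ n, ({i | i ∈ A n ∧ gB i ≠ g n i}).Finite := by
    intro n
    have : ({i | i ∈ A n ∧ gB i ≠ g n i}) ⊆
        ⋃ m ∈ Set.Iic n, {i | i ∈ A m ∧ g m i ≠ g n i} := by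
      intro i ⟨hi, hne⟩
      obtain ⟨m, hmn, him, heq⟩ := hgB_eq n i hi
      refine Set.mem_biUnion hmn ⟨him, ?_⟩
      rw [← heq]; exact hne
    exact Set.Finite.subset ((Set.finite_Iic n).biUnion fun m hm => agree m n hm) this
  have hcofB : ∀ i ∈ (⋃ n, A n), (gB i).cof = lam := by
    intro i hi
    obtain ⟨n, hn⟩ := Set.mem_iUnion.1 hi
    obtain ⟨m, _, him, heq⟩ := hgB_eq n i hn
    rw [heq]; exact hcof m i him
  have hgBpos : ∀ i ∈ (⋃ n, A n), 0 < gB i := by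
    intro i hi
    obtain ⟨n, hn⟩ := Set.mem_iUnion.1 hi
    obtain ⟨m, _, him, heq⟩ := hgB_eq n i hn
    rw [heq]; exact gpos m i him
  -- f α is below gB mod finite on each A n
  have hubB : ∀ α < lam.ord, ∀ n, ({i | i ∈ A n ∧ ¬ f α i < gB i}).Finite := by
    intro α hα n
    apply Set.Finite.subset ((hub n α hα).union (hD n))
    intro i ⟨hi, hbad⟩
    by_cases heq : gB i = g n i
    · exact Or.inl ⟨hi, fun hc => hbad (heq ▸ hc)⟩
    · exact Or.inr ⟨hi, heq⟩
  -- fundamental sequences in each gB i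
  have hfs : ∀ i : ℕ, ∃ γ : Ordinal → Ordinal, i ∈ (⋃ n, A n) →
      (∀ ξ < lam.ord, ∀ ζ < lam.ord, ξ ≤ ζ → γ ξ ≤ γ ζ) ∧
      (∀ ξ < lam.ord, γ ξ < gB i) ∧
      (∀ v < gB i, ∃ ξ < lam.ord, v < γ ξ) := by
    intro i
    by_cases hi : i ∈ (⋃ n, A n)
    · obtain ⟨fs, hfs⟩ := Ordinal.exists_fundamental_sequence (gB i)
      have hord : (gB i).cof.ord = lam.ord := by rw [hcofB i hi]
      refine ⟨fun ξ => if h : ξ < (gB i).cof.ord then fs ξ h else 0, fun _ => ⟨?_, ?_, ?_⟩⟩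
      · intro ξ hξ ζ hζ hle
        rw [← hord] at hξ hζ
        simp only [dif_pos hξ, dif_pos hζ]
        exact hfs.monotone hξ hζ hle
      · intro ξ hξ
        rw [← hord] at hξ
        simp only [dif_pos hξ]
        exact hfs.blsub_eq ▸ Ordinal.lt_blsub _ _ _
      · intro v hv
        rw [← hfs.blsub_eq] at hv
        obtain ⟨ξ, hξ, hle⟩ := Ordinal.lt_blsub_iff.1 hv
        have hξ' : ξ < lam.ord := hord ▸ hξ
        have hsucc : Order.succ ξ < lam.ord := hlimord.succ_lt hξ'
        have hsucc' : Order.succ ξ < (gB i).cof.ord := hord ▸ hsucc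
        refine ⟨Order.succ ξ, hsucc, ?_⟩
        simp only [dif_pos hsucc']
        exact hle.trans_lt (hfs.strict_mono hξ hsucc' (Order.lt_succ ξ))
    · exact ⟨fun _ => 0, fun h => absurd h hi⟩
  choose γ hγ using hfs
  -- for each ξ, an f β dominating the ξ-th slice mod finite on each A n
  have hwβ : ∀ ξ : Ordinal, ∃ β : Ordinal, ξ < lam.ord →
      β < lam.ord ∧ ∀ n, ({i | i ∈ A n ∧ ¬ γ i ξ < f β i}).Finite := by
    intro ξ
    by_cases hξ : ξ < lam.ord
    · have hslice : ∀ n, ∃ b, b < lam.ord ∧ ({i | i ∈ A n ∧ ¬ γ i ξ < f b i}).Finite := by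
        intro n
        have h1 : ltStarOn (A n) (fun i => γ i ξ) (g n) := by
          apply Set.Finite.subset (hD n)
          intro i ⟨hi, hbad⟩
          refine ⟨hi, fun heq => hbad ?_⟩
          have hiU : i ∈ (⋃ n, A n) := Set.mem_iUnion.2 ⟨n, hi⟩
          have := (hγ i hiU).2.1 ξ hξ
          rw [heq] at this; exact this
        obtain ⟨b, hb, hfin⟩ := hexact n _ h1
        exact ⟨b, hb, hfin⟩
      choose bb hbb1 hbb2 using hslice
      set β : Ordinal := ⨆ n, Order.succ (bb n) with hβ
      have hβlt : β < lam.ord :=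
        Ordinal.iSup_lt_ord hNlt fun n => hlimord.succ_lt (hbb1 n)
      have hblt : ∀ n, bb n < β := fun n =>
        (Order.lt_succ (bb n)).trans_le (Ordinal.le_iSup (fun n => Order.succ (bb n)) n)
      refine ⟨β, fun _ => ⟨hβlt, fun n => ?_⟩⟩
      have h2 := hf (bb n) (hbb1 n) β hβlt (hblt n)
      apply Set.Finite.subset ((hbb2 n).union h2)
      intro i ⟨hi, hbad⟩
      by_cases h3 : γ i ξ < f (bb n) i
      · refine Or.inr ⟨Set.mem_iUnion.2 ⟨n, hi⟩, fun hc => hbad (h3.trans hc)⟩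
      · exact Or.inl ⟨hi, h3⟩
    · exact ⟨0, fun h => absurd h hξ⟩
  choose βf hβf using hwβ
  -- combined per-level bound functions
  have hsfun : ∀ δ : Ordinal, ∃ h : ℕ → ℕ, δ < lam.ord →
      ∀ n, ∀ i ∈ A n, h n < i → (f δ i < gB i ∧ γ i δ < f (βf δ) i) := by
    intro δ
    by_cases hδ : δ < lam.ord
    · have hE : ∀ n, ({i | i ∈ A n ∧ ¬ f δ i < gB i} ∪
          {i | i ∈ A n ∧ ¬ γ i δ < f (βf δ) i}).Finite :=
        fun n => (hubB δ hδ n).union ((hβf δ hδ).2 n)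
      have hEb : ∀ n, ∃ b : ℕ, ∀ i ∈ ({i | i ∈ A n ∧ ¬ f δ i < gB i} ∪
          {i | i ∈ A n ∧ ¬ γ i δ < f (βf δ) i}), i ≤ b := by
        intro n
        obtain ⟨b, hb⟩ := (hE n).bddAbove
        exact ⟨b, fun i hi => hb hi⟩
      choose bnd hbnd using hEb
      refine ⟨bnd, fun _ n i hi hlt' => ?_⟩
      constructor
      · by_contra hc
        exact absurd (hbnd n i (Or.inl ⟨hi, hc⟩)) (by omega)
      · by_contra hc
        exact absurd (hbnd n i (Or.inr ⟨hi, hc⟩)) (by omega)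
    · exact ⟨fun _ => 0, fun h => absurd h hδ⟩
  choose hfun hhfun using hsfun
  -- a dominating family of size 𝔡
  have hdom : ∃ F : Set (ℕ → ℕ), #F = dominatingNumber ∧
      ∀ u : ℕ → ℕ, ∃ v ∈ F, ltStarN u v := by
    have hne : {c | ∃ F : Set (ℕ → ℕ), #F = c ∧ ∀ u : ℕ → ℕ, ∃ v ∈ F, ltStarN u v}.Nonempty := by
      refine ⟨#(Set.univ : Set (ℕ → ℕ)), Set.univ, rfl, fun u => ⟨fun n => u n + 1, Set.mem_univ _, ?_⟩⟩
      have : {n | u n + 1 ≤ u n} = ∅ := by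
        ext n; simp
      rw [ltStarN, this]; exact Set.finite_empty
    exact csInf_mem hne
  obtain ⟨F, hF1, hF2⟩ := hdom
  -- pick t ∈ F good for cofinally many δ
  have hT : ∃ t ∈ F, ∀ c < lam.ord, ∃ δ, c ≤ δ ∧ δ < lam.ord ∧ ltStarN (hfun δ) t := by
    by_contra hcon
    push_neg at hcon
    have hc' : ∀ t : F, ∃ c, c < lam.ord ∧
        ∀ δ, c ≤ δ → δ < lam.ord → ¬ ltStarN (hfun δ) (t : ℕ → ℕ) := fun t => by
      obtain ⟨c, hc1, hc2⟩ := hcon t t.2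
      exact ⟨c, hc1, hc2⟩
    choose cf hcf1 hcf2 using hc'
    have hFlt : (#F) < lam.ord.cof := by rw [hcofo, hF1]; exact hlt
    set δs : Ordinal := ⨆ t : F, cf t with hδs
    have hδslt : δs < lam.ord := Ordinal.iSup_lt_ord hFlt hcf1
    obtain ⟨v, hv, hvd⟩ := hF2 (hfun δs)
    exact hcf2 ⟨v, hv⟩ δs (Ordinal.le_iSup cf ⟨v, hv⟩) hδslt hvd
  obtain ⟨t, htF, ht⟩ := hT
  -- the set B
  set B : Set ℕ := {i | ∃ n, i ∈ A n ∧ t n < i} with hB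
  have hBsub : B ⊆ ⋃ n, A n := fun i ⟨n, hn, _⟩ => Set.mem_iUnion.2 ⟨n, hn⟩
  have hAnB : ∀ n, (A n \ B).Finite := by
    intro n
    apply Set.Finite.subset (Set.finite_Iic (t n))
    intro i ⟨hi, hnB⟩
    by_contra hc
    simp only [Set.mem_Iic, not_le] at hc
    exact hnB ⟨n, hi, hc⟩
  -- the key finiteness property on B for good δ
  have key : ∀ δ, δ < lam.ord → ltStarN (hfun δ) t →
      ({i | i ∈ B ∧ ¬ f δ i < gB i}).Finite ∧
      ({i | i ∈ B ∧ ¬ γ i δ < f (βf δ) i}).Finite := by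
    intro δ hδ hdomt
    obtain ⟨N, hN⟩ : ∃ N : ℕ, ∀ n, t n ≤ hfun δ n → n < N := by
      obtain ⟨b, hb⟩ := hdomt.bddAbove
      exact ⟨b + 1, fun n hn => by have := hb hn; omega⟩
    constructor
    · apply Set.Finite.subset (Set.Finite.biUnion (Set.finite_Iio N)
        (fun n _ => hubB δ hδ n))
      intro i ⟨hiB, hbad⟩
      obtain ⟨n, hn, hti⟩ := hiB
      have hnN : n < N := by
        by_contra hc
        have h1 : hfun δ n < t n := by
          by_contra hc2; exact absurd (hN n (by omega)) (by omega)
        exact hbad (hhfun δ hδ n i hn (by omega)).1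
      exact Set.mem_biUnion hnN ⟨hn, hbad⟩
    · apply Set.Finite.subset (Set.Finite.biUnion (Set.finite_Iio N)
        (fun n _ => (hβf δ hδ).2 n))
      intro i ⟨hiB, hbad⟩
      obtain ⟨n, hn, hti⟩ := hiB
      have hnN : n < N := by
        by_contra hc
        have h1 : hfun δ n < t n := by
          by_contra hc2; exact absurd (hN n (by omega)) (by omega)
        exact hbad (hhfun δ hδ n i hn (by omega)).2
      exact Set.mem_biUnion hnN ⟨hn, hbad⟩
  refine ⟨B, hBsub, hAnB, gB, fun i hi => hcofB i (hBsub hi), ?_, ?_⟩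
  · -- upper bound on B
    intro α hα
    obtain ⟨δ, hαδ, hδ, hδd⟩ := ht (Order.succ α) (hlimord.succ_lt hα)
    have hαδ' : α < δ := (Order.lt_succ α).trans_le hαδ
    have h1 := hf α hα δ hδ hαδ'
    apply Set.Finite.subset (h1.union (key δ hδ hδd).1)
    intro i ⟨hiB, hbad⟩
    by_cases h2 : f α i < f δ i
    · exact Or.inr ⟨hiB, fun hc => hbad (h2.trans hc)⟩
    · exact Or.inl ⟨hBsub hiB, h2⟩
  · -- exactness on B
    intro u hu
    have hu' : ({i | i ∈ B ∧ ¬ u i < gB i}).Finite := hu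
    set u' : ℕ → Ordinal := fun i => if i ∈ B ∧ u i < gB i then u i else 0 with hu'd
    have hu'lt : ∀ i ∈ B, u' i < gB i := by
      intro i hi
      by_cases hc : i ∈ B ∧ u i < gB i
      · simpa [hu'd, hc] using hc.2
      · simpa [hu'd, hc] using hgBpos i (hBsub hi)
    have hξch : ∀ i : ℕ, ∃ ξ, ξ < lam.ord ∧ (i ∈ B → u' i < γ i ξ) := by
      intro i
      by_cases hi : i ∈ B
      · obtain ⟨ξ, hξ, hlt'⟩ := (hγ i (hBsub hi)).2.2 (u' i) (hu'lt i hi)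
        exact ⟨ξ, hξ, fun _ => hlt'⟩
      · exact ⟨0, hlimord.pos, fun h => absurd h hi⟩
    choose ξf hξf1 hξf2 using hξch
    set ξs : Ordinal := ⨆ i, ξf i with hξs
    have hξslt : ξs < lam.ord := Ordinal.iSup_lt_ord hNlt hξf1
    obtain ⟨δ, hξδ, hδ, hδd⟩ := ht ξs hξslt
    refine ⟨βf δ, (hβf δ hδ).1, ?_⟩
    apply Set.Finite.subset (hu'.union (key δ hδ hδd).2)
    intro i ⟨hiB, hbad⟩
    by_cases h2 : u i < gB i
    · right
      refine ⟨hiB, fun hc => hbad ?_⟩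
      have e1 : u' i = u i := by rw [hu'd]; simp [hiB, h2]
      have e2 : u' i < γ i δ := by
        have h3 : γ i (ξf i) ≤ γ i δ := (hγ i (hBsub hiB)).1 (ξf i) (hξf1 i) δ hδ
          ((Ordinal.le_iSup ξf i).trans hξδ)
        exact (hξf2 i hiB).trans_le h3
      rw [e1] at e2
      exact e2.trans hc
    · exact Or.inl ⟨hiB, h2⟩
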